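/- Deterministic piecewise-in-time underestimation: with a time grid t = t₀ < t₁ < … < t_{n} = T, let x : [t,T] → ℝⁿ be C¹ with x'(s) = f(x(s),u(s)), (x(s),u(s)) ∈ X × U. Suppose w₁,…,w_n : ℝ × ℝⁿ → ℝ are C¹ and satisfy: (i) ∂w_i/∂t(s,y) + f(y,v)ᵀ∇ₓw_i(s,y) + ℓ(y,v) ≥ 0 for all (s,y,v) ∈ [t_{i-1},t_i] × X × U; (ii) w_i(t_{i-1}, y) ≥ w_{i-1}(t_{i-1}, y) for all y ∈ X and 2 ≤ i ≤ n; (iii) w_n(T, y) ≤ φ(y) for all y ∈ X. Then w₁(t, x(t)) ≤ ∫ₜᵀ ℓ(x(s),u(s)) ds + φ(x(T)). -/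

import Mathlib

open MeasureTheory

open Set in

lemma single_interval_det {n m : ℕ}
    (X : Set (Fin n → ℝ)) (U : Set (Fin m → ℝ))
    (f : (Fin n → ℝ) × (Fin m → ℝ) → Fin n → ℝ)
    (ℓ : (Fin n → ℝ) × (Fin m → ℝ) → ℝ)
    (a b : ℝ) (hab : a ≤ b)
    (x : ℝ → Fin n → ℝ) (u : ℝ → Fin m → ℝ)
    (hx : ∀ s ∈ Icc a b, HasDerivAt x (f (x s, u s)) s)
    (hmem : ∀ s ∈ Icc a b, x s ∈ X ∧ u s ∈ U)
    (hℓint : IntervalIntegrable (fun s => ℓ (x s, u s)) volume a b)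
    (W : ℝ → (Fin n → ℝ) → ℝ)
    (hW : ContDiff ℝ 1 (fun p : ℝ × (Fin n → ℝ) => W p.1 p.2))
    (hineq : ∀ s ∈ Icc a b, ∀ y ∈ X, ∀ v ∈ U,
      0 ≤ deriv (fun r => W r y) s + fderiv ℝ (W s) y (f (y, v)) + ℓ (y, v)) :
    W a (x a) ≤ (∫ s in a..b, ℓ (x s, u s)) + W b (x b) := by
  set Wf : ℝ × (Fin n → ℝ) → ℝ := fun p => W p.1 p.2 with hWf
  set g : ℝ → ℝ := fun s => W s (x s) with hg
  set g' : ℝ → ℝ := fun s =>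
    fderiv ℝ Wf (s, x s) (1, f (x s, u s)) with hg'
  have hder : ∀ s ∈ Icc a b, HasDerivAt g (g' s) s := by
    intro s hs
    have hD : HasFDerivAt Wf (fderiv ℝ Wf (s, x s)) (s, x s) :=
      ((hW.differentiable one_ne_zero) (s, x s)).hasFDerivAt
    have hcurve : HasDerivAt (fun r => (r, x r)) ((1 : ℝ), f (x s, u s)) s :=
      HasDerivAt.prodMk (hasDerivAt_id s) (hx s hs)
    exact hD.comp_hasDerivAt s hcurve
  -- identify g' with the partial derivatives
  have hsplit : ∀ s ∈ Icc a b,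
      g' s = deriv (fun r => W r (x s)) s + fderiv ℝ (W s) (x s) (f (x s, u s)) := by
    intro s hs
    have hD : HasFDerivAt Wf (fderiv ℝ Wf (s, x s)) (s, x s) :=
      ((hW.differentiable one_ne_zero) (s, x s)).hasFDerivAt
    have h1 : HasDerivAt (fun r => W r (x s)) (fderiv ℝ Wf (s, x s) (1, 0)) s := by
      have hc : HasDerivAt (fun r => (r, x s)) ((1 : ℝ), (0 : Fin n → ℝ)) s :=
        HasDerivAt.prodMk (hasDerivAt_id s) (hasDerivAt_const s (x s))
      exact hD.comp_hasDerivAt s hc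
    have h2 : HasFDerivAt (W s)
        ((fderiv ℝ Wf (s, x s)).comp
          (((0 : (Fin n → ℝ) →L[ℝ] ℝ)).prod (ContinuousLinearMap.id ℝ (Fin n → ℝ)))) (x s) := by
      have hc : HasFDerivAt (fun z : Fin n → ℝ => (s, z))
          (((0 : (Fin n → ℝ) →L[ℝ] ℝ)).prod (ContinuousLinearMap.id ℝ (Fin n → ℝ))) (x s) :=
        HasFDerivAt.prodMk (hasFDerivAt_const s (x s)) (hasFDerivAt_id (x s))
      exact hD.comp (x s) hc
    rw [h1.deriv, h2.fderiv]
    have : ((1 : ℝ), f (x s, u s)) = ((1 : ℝ), (0 : Fin n → ℝ)) + ((0 : ℝ), f (x s, u s)) := by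
      simp
    show (fderiv ℝ Wf (s, x s)) ((1 : ℝ), f (x s, u s)) = _
    rw [this, map_add]
    simp [ContinuousLinearMap.comp_apply]
  have hlb : ∀ s ∈ Ioo a b, -ℓ (x s, u s) ≤ g' s := by
    intro s hs
    have hs' : s ∈ Icc a b := Ioo_subset_Icc_self hs
    have := hineq s hs' (x s) (hmem s hs').1 (u s) (hmem s hs').2
    rw [hsplit s hs']
    linarith
  have hcont : ContinuousOn g (Icc a b) := fun s hs =>
    (hder s hs).continuousAt.continuousWithinAt
  have hint : IntegrableOn (fun s => -ℓ (x s, u s)) (Icc a b) :=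
    ((intervalIntegrable_iff_integrableOn_Icc_of_le hab).mp hℓint).neg
  have := intervalIntegral.integral_le_sub_of_hasDeriv_right_of_le hab hcont
    (fun s hs => ((hder s (Ioo_subset_Icc_self hs)).hasDerivWithinAt)) hint hlb
  rw [intervalIntegral.integral_neg] at this
  simp only [hg] at this
  linarith


set_option maxHeartbeats 1000000 in
/-- Deterministic piecewise-in-time underestimation: with a time grid
`t = τ₀ < τ₁ < … < τₙ = T`, piecewise subsolutions `w₁,…,wₙ` of the HJB inequality which are
monotone across breakpoints and satisfy the terminal inequality underestimate the control
cost along any admissible trajectory. (Here `w i` covers `[τ_i, τ_{i+1}]`, `0`-indexed.) -/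
theorem piecewise_deterministic_underestimation
    (n m nP : ℕ) (hnP : 0 < nP)
    (X : Set (Fin n → ℝ)) (U : Set (Fin m → ℝ))
    (f : (Fin n → ℝ) × (Fin m → ℝ) → Fin n → ℝ)
    (ℓ : (Fin n → ℝ) × (Fin m → ℝ) → ℝ) (φ : (Fin n → ℝ) → ℝ)
    (t T : ℝ)
    (τ : Fin (nP + 1) → ℝ) (hτmono : StrictMono τ) (hτ0 : τ 0 = t) (hτT : τ (Fin.last nP) = T)
    (x : ℝ → Fin n → ℝ) (u : ℝ → Fin m → ℝ)
    (hx : ∀ s ∈ Set.Icc t T, HasDerivAt x (f (x s, u s)) s)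
    (hmem : ∀ s ∈ Set.Icc t T, x s ∈ X ∧ u s ∈ U)
    (hℓint : IntervalIntegrable (fun s => ℓ (x s, u s)) volume t T)
    (w : Fin nP → ℝ → (Fin n → ℝ) → ℝ)
    (hw : ∀ i, ContDiff ℝ 1 (fun p : ℝ × (Fin n → ℝ) => w i p.1 p.2))
    -- (i) generator inequality on each time interval
    (hineq : ∀ i : Fin nP, ∀ s ∈ Set.Icc (τ i.castSucc) (τ i.succ), ∀ y ∈ X, ∀ v ∈ U,
        0 ≤ deriv (fun r => w i r y) s + fderiv ℝ (w i s) y (f (y, v)) + ℓ (y, v))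
    -- (ii) monotonicity at interior breakpoints
    (hmono : ∀ (i : ℕ) (h : i + 1 < nP), ∀ y ∈ X,
        w ⟨i, by omega⟩ (τ ⟨i + 1, by omega⟩) y ≤ w ⟨i + 1, h⟩ (τ ⟨i + 1, by omega⟩) y)
    -- (iii) terminal inequality
    (hterm : ∀ y ∈ X, w ⟨nP - 1, by omega⟩ T y ≤ φ y) :
    w ⟨0, hnP⟩ t (x t) ≤ (∫ s in t..T, ℓ (x s, u s)) + φ (x T) := by
  -- basic facts about the grid
  have hτle : ∀ j : Fin (nP + 1), t ≤ τ j ∧ τ j ≤ T := by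
    intro j
    constructor
    · rw [← hτ0]; exact hτmono.monotone (Fin.zero_le j)
    · rw [← hτT]; exact hτmono.monotone (Fin.le_last j)
  have hsub : ∀ i : Fin nP, Set.Icc (τ i.castSucc) (τ i.succ) ⊆ Set.Icc t T := by
    intro i
    exact Set.Icc_subset_Icc (hτle _).1 (hτle _).2
  have htT : t ≤ T := by rw [← hτ0, ← hτT]; exact hτmono.monotone (Fin.zero_le _)
  have hintsub : ∀ (a b : ℝ), t ≤ a → a ≤ b → b ≤ T →
      IntervalIntegrable (fun s => ℓ (x s, u s)) volume a b := by
    intro a b h1 h2 h3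
    apply hℓint.mono_set
    rw [Set.uIcc_of_le h2, Set.uIcc_of_le htT]
    exact Set.Icc_subset_Icc h1 h3
  -- the single-interval bound for each piece
  have piece : ∀ i : Fin nP,
      w i (τ i.castSucc) (x (τ i.castSucc)) ≤
        (∫ s in (τ i.castSucc)..(τ i.succ), ℓ (x s, u s)) + w i (τ i.succ) (x (τ i.succ)) := by
    intro i
    have hab : τ i.castSucc ≤ τ i.succ := (hτmono (Fin.castSucc_lt_succ : i.castSucc < i.succ)).le
    exact single_interval_det X U f ℓ _ _ hab x u
      (fun s hs => hx s (hsub i hs)) (fun s hs => hmem s (hsub i hs))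
      (hintsub _ _ (hτle _).1 hab (hτle _).2)
      (w i) (hw i) (hineq i)
  -- chain the pieces by induction
  have key : ∀ k : ℕ, ∀ hk : k < nP,
      w ⟨0, hnP⟩ t (x t) ≤ (∫ s in t..(τ ⟨k + 1, by omega⟩), ℓ (x s, u s))
        + w ⟨k, hk⟩ (τ ⟨k + 1, by omega⟩) (x (τ ⟨k + 1, by omega⟩)) := by
    intro k
    induction k with
    | zero =>
      intro hk
      have := piece ⟨0, hk⟩
      simpa [Fin.castSucc, Fin.succ, hτ0] using this
    | succ k ih =>
      intro hk
      have hk' : k < nP := by omega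
      have h1 := ih hk'
      have h2 := hmono k hk (x (τ ⟨k + 1, by omega⟩)) (hmem _ ⟨(hτle _).1, (hτle _).2⟩).1
      have h3 := piece ⟨k + 1, hk⟩
      have hcs : (⟨k + 1, hk⟩ : Fin nP).castSucc = (⟨k + 1, by omega⟩ : Fin (nP + 1)) := rfl
      have hsc : (⟨k + 1, hk⟩ : Fin nP).succ = (⟨k + 2, by omega⟩ : Fin (nP + 1)) := rfl
      rw [hcs, hsc] at h3
      have hadd : (∫ s in t..(τ ⟨k + 1, by omega⟩), ℓ (x s, u s))
          + (∫ s in (τ ⟨k + 1, by omega⟩)..(τ ⟨k + 2, by omega⟩), ℓ (x s, u s))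
          = ∫ s in t..(τ ⟨k + 2, by omega⟩), ℓ (x s, u s) := by
        apply intervalIntegral.integral_add_adjacent_intervals
        · exact hintsub _ _ le_rfl (hτle _).1 (hτle _).2
        · exact hintsub _ _ (hτle _).1
            (hτmono.monotone (Fin.mk_le_mk.mpr (by omega))) (hτle _).2
      calc w ⟨0, hnP⟩ t (x t)
          ≤ (∫ s in t..(τ ⟨k + 1, by omega⟩), ℓ (x s, u s))
            + w ⟨k, hk'⟩ (τ ⟨k + 1, by omega⟩) (x (τ ⟨k + 1, by omega⟩)) := h1
        _ ≤ (∫ s in t..(τ ⟨k + 1, by omega⟩), ℓ (x s, u s))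
            + w ⟨k + 1, hk⟩ (τ ⟨k + 1, by omega⟩) (x (τ ⟨k + 1, by omega⟩)) := by linarith
        _ ≤ (∫ s in t..(τ ⟨k + 1, by omega⟩), ℓ (x s, u s))
            + ((∫ s in (τ ⟨k + 1, by omega⟩)..(τ ⟨k + 2, by omega⟩), ℓ (x s, u s))
              + w ⟨k + 1, hk⟩ (τ ⟨k + 2, by omega⟩) (x (τ ⟨k + 2, by omega⟩))) := by linarith
        _ = (∫ s in t..(τ ⟨k + 2, by omega⟩), ℓ (x s, u s))
            + w ⟨k + 1, hk⟩ (τ ⟨k + 2, by omega⟩) (x (τ ⟨k + 2, by omega⟩)) := by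
              linarith [hadd]
  have hfin := key (nP - 1) (by omega)
  have hlast : (⟨nP - 1 + 1, by omega⟩ : Fin (nP + 1)) = Fin.last nP := by
    apply Fin.ext; simp only [Fin.val_last]; omega
  rw [hlast, hτT] at hfin
  have hT : x T ∈ X := (hmem T ⟨htT, le_rfl⟩).1
  have := hterm (x T) hT
  calc w ⟨0, hnP⟩ t (x t) ≤ _ := hfin
    _ ≤ (∫ s in t..T, ℓ (x s, u s)) + φ (x T) := by
        gcongr
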